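/- Let p_1 = 3, p_2 = 5, p_3 = 7, p_4 = 11, … be the increasing enumeration of the odd prime numbers and fix a natural number m ≥ 2. The constant 1 is best possible on the left: if α' is a real number such that (Π_{n=1}^{m−1} p_n^{2k}/(p_n^{2k} − 1)) · p_m^{2k}/(p_m^{2k} − α') < (π^{2k}(2^{2k} − 1)/(2·(2k)!)) · |B_{2k}| for every natural number k ≥ 1, then α' ≤ 1. -/

import Mathlib

open Finset

/-- The `n`-th odd prime (0-indexed): `oddPrime 0 = 3`, `oddPrime 1 = 5`, etc. -/
noncomputable def oddPrime (n : ℕ) : ℕ := Nat.nth (fun p => p.Prime ∧ p ≠ 2) n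

private lemma oddPrime_infinite : {p : ℕ | p.Prime ∧ p ≠ 2}.Infinite := by
  have h : {p : ℕ | p.Prime ∧ p ≠ 2} = {p | p.Prime} \ {2} := by
    ext q; simp [Set.mem_diff]
  rw [h]
  exact Nat.infinite_setOf_prime.diff (Set.finite_singleton 2)

private lemma oddPrime_spec (n : ℕ) : (oddPrime n).Prime ∧ oddPrime n ≠ 2 :=
  Nat.nth_mem_of_infinite oddPrime_infinite n

private lemma three_le_oddPrime (n : ℕ) : 3 ≤ oddPrime n := by
  obtain ⟨hp, h2⟩ := oddPrime_spec n
  have := hp.two_le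
  omega

private lemma primesBelow_oddPrime (M : ℕ) :
    Nat.primesBelow (oddPrime M) = insert 2 ((Finset.range M).image oddPrime) := by
  classical
  ext q
  simp only [Nat.mem_primesBelow, Finset.mem_insert, Finset.mem_image, Finset.mem_range]
  constructor
  · rintro ⟨hlt, hq⟩
    rcases eq_or_ne q 2 with rfl | hq2
    · exact Or.inl rfl
    · right
      have hcnt := Nat.nth_count (p := fun p => p.Prime ∧ p ≠ 2) ⟨hq, hq2⟩
      refine ⟨Nat.count (fun p => p.Prime ∧ p ≠ 2) q, ?_, hcnt⟩
      rw [← Nat.nth_lt_nth oddPrime_infinite, hcnt]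
      exact hlt
  · rintro (rfl | ⟨n, hn, rfl⟩)
    · exact ⟨by have := three_le_oddPrime M; omega, Nat.prime_two⟩
    · exact ⟨(Nat.nth_lt_nth oddPrime_infinite).2 hn, (oddPrime_spec n).1⟩

/-- The completely multiplicative function `n ↦ (n^K)⁻¹` on `ℝ`. -/
private noncomputable def gK (K : ℕ) : ℕ →* ℝ where
  toFun n := (((n : ℝ)) ^ K)⁻¹
  map_one' := by simp
  map_mul' m n := by push_cast; rw [mul_pow, mul_inv]

private lemma gK_apply (K n : ℕ) : (gK K) n = (((n : ℝ)) ^ K)⁻¹ := rfl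

private lemma gK_nonneg (K n : ℕ) : 0 ≤ (gK K) n := by
  rw [gK_apply]; positivity

private lemma gK_summable {K : ℕ} (hK : 2 ≤ K) : Summable ⇑(gK K) := by
  have h : Summable (fun n : ℕ => 1 / (n : ℝ) ^ K) :=
    Real.summable_one_div_nat_pow.mpr (by omega)
  refine h.congr fun n => ?_
  rw [gK_apply, one_div]

/-- Tail estimate: `∑_{n > P} n^{-K} ≤ (P+1)^{-(K-2)} / P`. -/
private lemma gK_tail_le {K : ℕ} (hK : 2 ≤ K) (P : ℕ) (hP : 1 ≤ P) :
    ∑' j : ℕ, (gK K) (j + (P + 1)) ≤ (((P : ℝ) + 1) ^ (K - 2))⁻¹ / (P : ℝ) := by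
  set c : ℝ := (P : ℝ) with hcdef
  have hcpos : (0 : ℝ) < c := by
    rw [hcdef]; exact_mod_cast Nat.lt_of_lt_of_le Nat.zero_lt_one hP
  set D : ℝ := ((c + 1) ^ (K - 2))⁻¹ with hDdef
  have hDpos : 0 < D := by positivity
  have hbound : ∀ n : ℕ, ∑ j ∈ Finset.range n, (gK K) (j + (P + 1)) ≤
      D * (1 / c - 1 / (c + n)) := by
    intro n
    induction n with
    | zero => simp
    | succ n ih =>
      rw [Finset.sum_range_succ]
      have hstep : (gK K) (n + (P + 1)) ≤ D * (1 / (c + n) - 1 / (c + n + 1)) := by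
        rw [gK_apply]
        have hcast : ((n + (P + 1) : ℕ) : ℝ) = (n : ℝ) + c + 1 := by
          push_cast [hcdef]; ring
        rw [hcast]
        have hy : (0:ℝ) < c + n := by positivity
        have hy1 : (0:ℝ) < c + n + 1 := by positivity
        have hsub : 1 / (c + n) - 1 / (c + n + 1) = ((c + n) * (c + n + 1))⁻¹ := by
          field_simp
          ring
        rw [hsub]
        have hyK : ((n:ℝ) + c + 1) ^ K = ((n:ℝ) + c + 1) ^ (K - 2) * ((n:ℝ) + c + 1) ^ 2 := by
          rw [← pow_add]; congr 1; omega
        have hge1 : (c + 1) ^ (K - 2) ≤ ((n:ℝ) + c + 1) ^ (K - 2) :=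
          pow_le_pow_left₀ (by linarith) (by linarith) _
        have hge2 : (c + n) * (c + n + 1) ≤ ((n:ℝ) + c + 1) ^ 2 := by nlinarith
        have hprod_le : (c + 1) ^ (K - 2) * ((c + n) * (c + n + 1)) ≤ ((n:ℝ) + c + 1) ^ K := by
          rw [hyK]
          exact mul_le_mul hge1 hge2 (by positivity) (by positivity)
        have hlpos : (0:ℝ) < (c + 1) ^ (K - 2) * ((c + n) * (c + n + 1)) := by positivity
        calc (((n:ℝ) + c + 1) ^ K)⁻¹ ≤ ((c + 1) ^ (K - 2) * ((c + n) * (c + n + 1)))⁻¹ :=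
              inv_anti₀ hlpos hprod_le
          _ = D * ((c + n) * (c + n + 1))⁻¹ := by rw [hDdef, mul_inv]
      have hfinal : D * (1 / c - 1 / (c + n)) + D * (1 / (c + n) - 1 / (c + n + 1)) =
          D * (1 / c - 1 / (c + ((n : ℕ) + 1 : ℕ))) := by
        push_cast; ring
      calc ∑ j ∈ Finset.range n, (gK K) (j + (P + 1)) + (gK K) (n + (P + 1)) ≤
          D * (1 / c - 1 / (c + n)) + D * (1 / (c + n) - 1 / (c + n + 1)) :=
            add_le_add ih hstep
        _ = D * (1 / c - 1 / (c + ((n : ℕ) + 1 : ℕ))) := hfinal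
  have hsum : Summable ⇑(gK K) := gK_summable hK
  refine Summable.tsum_le_of_sum_range_le (hsum.comp_injective (add_left_injective (P+1))) fun n => ?_
  refine le_trans (hbound n) ?_
  have h1 : (0:ℝ) ≤ 1 / (c + n) := by positivity
  rw [div_eq_mul_one_div D c]
  nlinarith

private lemma one_mem_smoothNumbers (P : ℕ) : (1 : ℕ) ∈ Nat.smoothNumbers P := by
  rw [Nat.mem_smoothNumbers']
  intro q hq hq1
  exact absurd (Nat.le_of_dvd one_pos hq1) (by have := hq.two_le; omega)

set_option maxHeartbeats 1000000 in
theorem bernoulli_lower_bound_alpha'_best (m : ℕ) (hm : 2 ≤ m) (α' : ℝ)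
    (h : ∀ k : ℕ, 1 ≤ k →
      (∏ n ∈ Finset.range (m - 1),
          ((oddPrime n : ℝ) ^ (2 * k) / ((oddPrime n : ℝ) ^ (2 * k) - 1))) *
        ((oddPrime (m - 1) : ℝ) ^ (2 * k) / ((oddPrime (m - 1) : ℝ) ^ (2 * k) - α'))
      < (Real.pi ^ (2 * k) * ((2 : ℝ) ^ (2 * k) - 1) / (2 * (Nat.factorial (2 * k) : ℝ))) *
          |(bernoulli (2 * k) : ℝ)|) :
    α' ≤ 1 := by
  by_contra hα
  push_neg at hα
  have hε : (0 : ℝ) < α' - 1 := by linarith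
  set P : ℕ := oddPrime (m - 1) with hPdef
  have hP3 : 3 ≤ P := three_le_oddPrime (m - 1)
  have hPR : (3 : ℝ) ≤ (P : ℝ) := by exact_mod_cast hP3
  have hPpos : (0 : ℝ) < (P : ℝ) := by linarith
  have hP1 : (1 : ℝ) < (P : ℝ) := by linarith
  -- choose k
  set c : ℝ := (P : ℝ) with hcdef
  have hr1 : c / (c + 1) < 1 := by
    rw [div_lt_one (by linarith)]; linarith
  have hr0 : 0 ≤ c / (c + 1) := by positivity
  have hδ : 0 < (α' - 1) * c / (c + 1) ^ 2 := by positivity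
  obtain ⟨N₁, hN₁⟩ := exists_pow_lt_of_lt_one hδ hr1
  obtain ⟨N₂, hN₂⟩ := pow_unbounded_of_one_lt (R := ℝ) α' hP1
  set k : ℕ := max 1 (max N₁ N₂) with hkdef
  have hk1 : 1 ≤ k := le_max_left _ _
  set K : ℕ := 2 * k with hKdef
  have hK2 : 2 ≤ K := by omega
  have hKN₁ : N₁ ≤ K := by
    have : N₁ ≤ k := le_trans (le_max_left _ _) (le_max_right _ _)
    omega
  have hKN₂ : N₂ ≤ K := by
    have : N₂ ≤ k := le_trans (le_max_right _ _) (le_max_right _ _)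
    omega
  -- α' < P^K
  have hPK : α' < (P : ℝ) ^ K :=
    lt_of_lt_of_le hN₂ (pow_le_pow_right₀ (by linarith) hKN₂)
  have hPKpos : (0 : ℝ) < (P : ℝ) ^ K := by positivity
  set x : ℝ := (((P : ℝ)) ^ K)⁻¹ with hxdef
  have hxpos : 0 < x := by positivity
  have hαx : α' * x < 1 := by
    rw [hxdef, mul_inv_lt_iff₀ hPKpos, one_mul]
    exact hPK
  have hα0 : 0 < α' := by linarith
  have hαx0 : 0 < α' * x := by positivity
  -- the summable function
  have hsum : Summable ⇑(gK K) := gK_summable hK2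
  -- Euler product
  have hEuler := EulerProduct.prod_primesBelow_geometric_eq_tsum_smoothNumbers hsum P
  set S : ℝ := ∑' (m : ↑(Nat.smoothNumbers P)), (gK K) ↑m with hSdef
  set Z : ℝ := ∑' (n : ℕ), (gK K) n with hZdef
  -- the zeta value
  have hZsum : HasSum (fun n : ℕ => (gK K) n)
      ((-1) ^ (k + 1) * 2 ^ (2 * k - 1) * Real.pi ^ (2 * k) *
        (bernoulli (2 * k) : ℝ) / ((2 * k).factorial : ℝ)) := by
    have h0 := hasSum_zeta_nat (k := k) (by omega)
    refine h0.congr_fun fun n => ?_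
    rw [gK_apply, one_div, hKdef]
  have hZval : Z = (-1) ^ (k + 1) * 2 ^ (2 * k - 1) * Real.pi ^ (2 * k) *
      (bernoulli (2 * k) : ℝ) / ((2 * k).factorial : ℝ) := hZsum.tsum_eq
  have hZnonneg : 0 ≤ Z := tsum_nonneg (gK_nonneg K)
  have hπpos : (0 : ℝ) < Real.pi := Real.pi_pos
  have hfacpos : (0 : ℝ) < ((2 * k).factorial : ℝ) := by
    exact_mod_cast Nat.factorial_pos _
  -- |B| in terms of Z
  have habs : |(bernoulli (2 * k) : ℝ)| =
      Z * ((2 * k).factorial : ℝ) / (2 ^ (2 * k - 1) * Real.pi ^ (2 * k)) := by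
    have h2pow : (0 : ℝ) < 2 ^ (2 * k - 1) := by positivity
    have hπpow : (0 : ℝ) < Real.pi ^ (2 * k) := by positivity
    have habsZ : Z = |Z| := (abs_of_nonneg hZnonneg).symm
    rw [hZval] at habsZ
    rw [abs_div, abs_mul, abs_mul, abs_mul, abs_pow, abs_neg, abs_one, one_pow, one_mul,
      abs_of_pos h2pow, abs_of_pos hπpow, abs_of_pos hfacpos] at habsZ
    rw [hZval]
    field_simp at habsZ ⊢
    linarith [habsZ]
  -- rewrite RHS of h k
  have h2K : (1 : ℝ) < (2 : ℝ) ^ K := by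
    have h1 : (2 : ℝ) ^ 1 ≤ (2 : ℝ) ^ K := pow_le_pow_right₀ (by norm_num) (by omega)
    simpa using lt_of_lt_of_le (by norm_num) h1
  have hg2 : (gK K) 2 = ((2 : ℝ) ^ K)⁻¹ := by rw [gK_apply]; norm_num
  have hg2lt : (gK K) 2 < 1 := by
    rw [hg2, inv_lt_one_iff₀]; right; exact h2K
  have hg2pos : 0 < (gK K) 2 := by rw [hg2]; positivity
  have hg2pos' : 0 < 1 - (gK K) 2 := by linarith
  have hg2ne : (1 : ℝ) - (gK K) 2 ≠ 0 := ne_of_gt hg2pos'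
  have hRHS : Real.pi ^ (2 * k) * ((2 : ℝ) ^ (2 * k) - 1) / (2 * ((2 * k).factorial : ℝ)) *
      |(bernoulli (2 * k) : ℝ)| = (1 - (gK K) 2) * Z := by
    rw [habs, hg2]
    rw [← hKdef]
    have hπK : (0 : ℝ) < Real.pi ^ K := by positivity
    have h2K1' : (0 : ℝ) < (2:ℝ) ^ (K - 1) := by positivity
    have h2KK : (2 : ℝ) ^ K = 2 * 2 ^ (K - 1) := by
      rw [← pow_succ']; congr 1; omega
    have h2Kk1 : (2 : ℝ) ^ (2 * k - 1) = 2 ^ (K - 1) := by rw [← hKdef]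
    rw [h2KK, h2Kk1]
    field_simp
  -- rewrite LHS of h k : the finite product
  have hprodeq : (∏ n ∈ Finset.range (m - 1),
      ((oddPrime n : ℝ) ^ K / ((oddPrime n : ℝ) ^ K - 1))) =
      ∏ n ∈ Finset.range (m - 1), (1 - (gK K) (oddPrime n))⁻¹ := by
    refine Finset.prod_congr rfl fun n _ => ?_
    have h3 : (3 : ℝ) ≤ (oddPrime n : ℝ) := by exact_mod_cast three_le_oddPrime n
    have hq1 : (1 : ℝ) < (oddPrime n : ℝ) ^ K :=
      one_lt_pow₀ (by linarith) (by omega)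
    have hq0 : (0 : ℝ) < (oddPrime n : ℝ) ^ K := by linarith
    rw [gK_apply, inv_eq_one_div]
    field_simp
  have hProdInsert : ∏ q ∈ Nat.primesBelow P, (1 - (gK K) q)⁻¹ =
      (1 - (gK K) 2)⁻¹ * ∏ n ∈ Finset.range (m - 1), (1 - (gK K) (oddPrime n))⁻¹ := by
    rw [hPdef, primesBelow_oddPrime (m - 1), Finset.prod_insert, Finset.prod_image]
    · intro a _ b _ hab
      exact Nat.nth_injective oddPrime_infinite hab
    · intro hmem
      obtain ⟨n, _, hn⟩ := Finset.mem_image.mp hmem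
      exact (oddPrime_spec n).2 hn
  -- combine: finite product in h = (1 - g 2) * S
  have hfin : (∏ n ∈ Finset.range (m - 1),
      ((oddPrime n : ℝ) ^ K / ((oddPrime n : ℝ) ^ K - 1))) = (1 - (gK K) 2) * S := by
    rw [hprodeq, ← hEuler, hProdInsert, ← mul_assoc, mul_inv_cancel₀ hg2ne, one_mul]
  -- the last factor
  have hPKα : (0 : ℝ) < (P : ℝ) ^ K - α' := by linarith
  have hlast : (P : ℝ) ^ K / ((P : ℝ) ^ K - α') = (1 - α' * x)⁻¹ := by
    have h1 : 1 - α' * x = ((P : ℝ) ^ K - α') / ((P : ℝ) ^ K) := by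
      rw [hxdef]; field_simp
    rw [h1, inv_div]
  -- specialize h
  have hk := h k hk1
  rw [← hKdef] at hk
  rw [hfin, hlast, hRHS] at hk
  rw [mul_assoc] at hk
  have hk' : S * (1 - α' * x)⁻¹ < Z := (mul_lt_mul_iff_right₀ hg2pos').mp hk
  -- S ≥ 1
  have hSind : S = ∑' n : ℕ, (Nat.smoothNumbers P).indicator (⇑(gK K)) n := by
    rw [hSdef]; exact tsum_subtype _ _
  have hind_summable : Summable ((Nat.smoothNumbers P).indicator (⇑(gK K))) :=
    hsum.indicator _
  have hind_nonneg : ∀ n, 0 ≤ (Nat.smoothNumbers P).indicator (⇑(gK K)) n := fun n =>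
    Set.indicator_apply_nonneg fun _ => gK_nonneg K n
  have hS1 : (1 : ℝ) ≤ S := by
    rw [hSind]
    have h1 := Summable.le_tsum hind_summable 1 (fun j _ => hind_nonneg j)
    rw [Set.indicator_of_mem (one_mem_smoothNumbers P)] at h1
    rw [gK_apply] at h1
    norm_num at h1
    exact h1
  -- partial sum up to P is ≤ S
  have hfinle : ∑ i ∈ Finset.range P, (gK K) i ≤ S := by
    rw [hSind]
    have heq : ∀ i ∈ Finset.range P, (gK K) i =
        (Nat.smoothNumbers P).indicator (⇑(gK K)) i := by
      intro i hi
      rcases eq_or_ne i 0 with rfl | hi0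
      · rw [Set.indicator_apply]
        split
        · rfl
        · rw [gK_apply, Nat.cast_zero, zero_pow (by omega : K ≠ 0), inv_zero]
      · rw [Set.indicator_of_mem]
        rw [Nat.mem_smoothNumbers']
        intro q hq hqdvd
        have h4 := Nat.le_of_dvd (Nat.pos_of_ne_zero hi0) hqdvd
        have h5 := Finset.mem_range.mp hi
        omega
    rw [Finset.sum_congr rfl heq]
    exact Summable.sum_le_tsum _ (fun i _ => hind_nonneg i) hind_summable
  -- decompose Z
  have hZdecomp : Z = ∑ i ∈ Finset.range (P + 1), (gK K) i + ∑' j : ℕ, (gK K) (j + (P + 1)) := by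
    rw [hZdef]
    exact (Summable.sum_add_tsum_nat_add (P + 1) hsum).symm
  have hgP : (gK K) P = x := by rw [gK_apply, hxdef]
  set D : ℝ := ((c + 1) ^ (K - 2))⁻¹ with hDdef
  have hcpos : (0 : ℝ) < c := by linarith
  have hDpos : 0 < D := by positivity
  have htail : ∑' j : ℕ, (gK K) (j + (P + 1)) ≤ D / c :=
    gK_tail_le hK2 P (by omega)
  have hZle : Z ≤ S + x + D / c := by
    rw [hZdecomp, Finset.sum_range_succ, hgP]
    linarith only [add_le_add (add_le_add hfinle (le_refl x)) htail]
  -- lower bound for S * (1 - α'x)⁻¹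
  have hinv_ge : 1 + α' * x ≤ (1 - α' * x)⁻¹ := by
    rw [inv_eq_one_div, le_div_iff₀ (by linarith only [hαx])]
    calc (1 + α' * x) * (1 - α' * x) = 1 - (α' * x) ^ 2 := by ring
      _ ≤ 1 := sub_le_self 1 (sq_nonneg _)
  have hSlower : S + α' * x ≤ S * (1 - α' * x)⁻¹ := by
    calc S + α' * x ≤ S + S * (α' * x) :=
        add_le_add (le_refl S) (le_mul_of_one_le_left hαx0.le hS1)
      _ = S * (1 + α' * x) := by ring
      _ ≤ S * (1 - α' * x)⁻¹ :=
        mul_le_mul_of_nonneg_left hinv_ge (by linarith only [hS1])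
  -- conclude ε x < D / c
  have hkey : (α' - 1) * x < D / c := by
    have h6 := lt_of_le_of_lt hSlower hk'
    have h7 := lt_of_lt_of_le h6 hZle
    have h8 : (α' - 1) * x = α' * x - x := by ring
    linarith only [h7, h8]
  -- contradiction with choice of k
  have hrK : (c / (c + 1)) ^ K < (α' - 1) * c / (c + 1) ^ 2 :=
    lt_of_le_of_lt (pow_le_pow_of_le_one hr0 (le_of_lt hr1) hKN₁) hN₁
  have hxc : x = ((c : ℝ) ^ K)⁻¹ := by rw [hxdef, hcdef]
  have hcKpos : (0:ℝ) < c ^ K := by positivity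
  have hc1pos : (0:ℝ) < (c + 1) ^ (K - 2) := by positivity
  have hsplit : (c + 1) ^ K = (c + 1) ^ (K - 2) * (c + 1) ^ 2 := by
    rw [← pow_add]; congr 1; omega
  have hA : (α' - 1) * c < D * c ^ K := by
    have h8 := mul_lt_mul_of_pos_right hkey (mul_pos hcpos hcKpos)
    rw [hxc] at h8
    have e1 : (α' - 1) * (c ^ K)⁻¹ * (c * c ^ K) = (α' - 1) * c := by
      field_simp
    have e2 : D / c * (c * c ^ K) = D * c ^ K := by
      field_simp
    rwa [e1, e2] at h8
  have hB : c ^ K < (α' - 1) * c * (c + 1) ^ (K - 2) := by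
    have hc1Kpos : (0:ℝ) < (c + 1) ^ K := by positivity
    have h9 := mul_lt_mul_of_pos_right hrK hc1Kpos
    have e1 : (c / (c + 1)) ^ K * (c + 1) ^ K = c ^ K := by
      rw [div_pow]; field_simp
    have e2 : (α' - 1) * c / (c + 1) ^ 2 * (c + 1) ^ K = (α' - 1) * c * (c + 1) ^ (K - 2) := by
      rw [hsplit]; field_simp
    rwa [e1, e2] at h9
  have hC : D * (c + 1) ^ (K - 2) = 1 := inv_mul_cancel₀ (ne_of_gt hc1pos)
  have hfinal : c ^ K < c ^ K := by
    calc c ^ K < (α' - 1) * c * (c + 1) ^ (K - 2) := hB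
      _ < D * c ^ K * (c + 1) ^ (K - 2) := mul_lt_mul_of_pos_right hA hc1pos
      _ = c ^ K := by rw [mul_comm D (c ^ K), mul_assoc, hC, mul_one]
  exact lt_irrefl _ hfinal
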